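/- Let S be a semigroup, let μ₁,…,μ_N be N pairwise distinct multiplicative functions on S, and let A₁,…,A_N be additive functions on S. If Σ_{i=1}^N μ_i(x)A_i(x) = Σ_{j=1}^M c_j χ_j(x) for all x ∈ S, where c₁,…,c_M ∈ ℂ and χ₁,…,χ_M are multiplicative functions on S, then μ_i(x)A_i(x) = 0 for all x ∈ S and each i = 1,…,N. -/

import Mathlib

open scoped BigOperators

variable {S : Type*}

/-- A multiplicative function on a semigroup `S`. -/
def IsMultiplicativeFn [Semigroup S] (χ : S → ℂ) : Prop :=
  ∀ x y, χ (x * y) = χ x * χ y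

/-- An additive function on a semigroup `S`. -/
def IsAdditiveFn [Semigroup S] (a : S → ℂ) : Prop :=
  ∀ x y, a (x * y) = a x + a y

/-- A function additive on a subset `T` of `S`. -/
def IsAdditiveOnSet [Semigroup S] (a : S → ℂ) (T : Set S) : Prop :=
  ∀ x ∈ T, ∀ y ∈ T, a (x * y) = a x + a y

/-- A function multiplicative on a subset `T` of `S`. -/
def IsMultiplicativeOnSet [Semigroup S] (χ : S → ℂ) (T : Set S) : Prop :=
  ∀ x ∈ T, ∀ y ∈ T, χ (x * y) = χ x * χ y

/-- `Ψ_χ(φ) (x) = χ(x) φ(x)` for `x ∉ I_χ` and `0` on `I_χ = {x | χ x = 0}`.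
Functions on `S ∖ I_χ` are represented as functions on `S` whose values
off `{x | χ x ≠ 0}` are irrelevant. -/
noncomputable def PsiFn [Semigroup S] (χ φ : S → ℂ) : S → ℂ :=
  fun x => if χ x = 0 then 0 else χ x * φ x

/-- `S` is generated by its squares. -/
def SquareGenerated (S : Type*) [Semigroup S] : Prop :=
  ∀ x : S, x ∈ Subsemigroup.closure {y : S | ∃ z : S, y = z * z}

open Finset

section Aux

lemma seqK : ∀ (M : ℕ) (d r : ℕ → ℂ) (K : ℂ),
    (∀ j < M, r j = 1 → d j = 0) →
    (∀ n : ℕ, 1 ≤ n → K = ∑ j ∈ range M, d j * r j ^ n) → K = 0 := by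
  intro M
  induction M with
  | zero => intro d r K _ h; simpa using h 1 le_rfl
  | succ M ih =>
    intro d r K hd h
    by_cases hr : r M = 1
    · refine ih d r K (fun j hj => hd j (Nat.lt_succ_of_lt hj)) (fun n hn => ?_)
      have h1 := h n hn
      rw [sum_range_succ, hd M (Nat.lt_succ_self M) hr, zero_mul, add_zero] at h1
      exact h1
    · have key : ∀ n : ℕ, 1 ≤ n →
          K * (1 - r M) = ∑ j ∈ range M, (d j * (r j - r M)) * r j ^ n := by
        intro n hn
        have h1 := h n hn
        have h2 := h (n + 1) (by omega)
        calc K * (1 - r M) = K - r M * K := by ring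
        _ = (∑ j ∈ range (M+1), d j * r j ^ (n+1))
              - r M * ∑ j ∈ range (M+1), d j * r j ^ n := by rw [← h1, ← h2]
        _ = ∑ j ∈ range (M+1), (d j * (r j - r M)) * r j ^ n := by
              rw [mul_sum, ← sum_sub_distrib]
              exact sum_congr rfl fun j _ => by ring
        _ = ∑ j ∈ range M, (d j * (r j - r M)) * r j ^ n := by
              rw [sum_range_succ]; simp
      have h0 := ih (fun j => d j * (r j - r M)) r (K * (1 - r M))
          (fun j hj hj1 => by rw [hd j (Nat.lt_succ_of_lt hj) hj1, zero_mul]) key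
      have hne : (1 : ℂ) - r M ≠ 0 := sub_ne_zero.mpr (Ne.symm hr)
      exact (mul_eq_zero.mp h0).resolve_right hne

lemma seqA (M : ℕ) (c r : ℕ → ℂ) (a b : ℂ)
    (h : ∀ n : ℕ, 1 ≤ n → (n : ℂ) * a + b = ∑ j ∈ range M, c j * r j ^ n) : a = 0 := by
  apply seqK M (fun j => c j * (r j - 1)) r a (fun j _ hj1 => by rw [hj1]; ring)
  intro n hn
  have h1 := h n hn
  have h2 := h (n + 1) (by omega)
  push_cast at h2
  calc a = (((n : ℂ) + 1) * a + b) - ((n : ℂ) * a + b) := by ring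
  _ = (∑ j ∈ range M, c j * r j ^ (n+1)) - ∑ j ∈ range M, c j * r j ^ n := by
        rw [← h1, ← h2]
  _ = ∑ j ∈ range M, (c j * (r j - 1)) * r j ^ n := by
        rw [← sum_sub_distrib]
        exact sum_congr rfl fun j _ => by ring

/-- `n`-th "power" in a semigroup: `spow x n = x^(n+1)`. -/
def spow [Semigroup S] (x : S) : ℕ → S
  | 0 => x
  | n + 1 => spow x n * x

lemma mult_spow [Semigroup S] {μ : S → ℂ} (hμ : IsMultiplicativeFn μ) (x : S) :
    ∀ n : ℕ, μ (spow x n) = μ x ^ (n + 1)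
  | 0 => by simp [spow]
  | n + 1 => by rw [spow, hμ, mult_spow hμ x n]; ring

lemma add_spow [Semigroup S] {A : S → ℂ} (hA : IsAdditiveFn A) (x : S) :
    ∀ n : ℕ, A (spow x n) = ((n : ℂ) + 1) * A x
  | 0 => by simp [spow]
  | n + 1 => by rw [spow, hA, add_spow hA x n]; push_cast; ring

/-- `f` is a finite linear combination of multiplicative functions. -/
def MSpan [Semigroup S] (f : S → ℂ) : Prop :=
  ∃ (M : ℕ) (c : ℕ → ℂ) (χ : ℕ → S → ℂ),
    (∀ j < M, IsMultiplicativeFn (χ j)) ∧ ∀ x, f x = ∑ j ∈ range M, c j * χ j x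

lemma MSpan.congr [Semigroup S] {f g : S → ℂ} (h : MSpan f) (hfg : ∀ x, f x = g x) :
    MSpan g := by
  obtain ⟨M, c, χ, hχ, hs⟩ := h
  exact ⟨M, c, χ, hχ, fun x => (hfg x).symm.trans (hs x)⟩

lemma MSpan.sub [Semigroup S] {f g : S → ℂ} (hf : MSpan f) (hg : MSpan g) :
    MSpan (fun x => f x - g x) := by
  obtain ⟨M₁, c₁, χ₁, hχ₁, hs₁⟩ := hf
  obtain ⟨M₂, c₂, χ₂, hχ₂, hs₂⟩ := hg
  classical
  refine ⟨M₁ + M₂, fun j => if j < M₁ then c₁ j else -c₂ (j - M₁),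
    fun j => if j < M₁ then χ₁ j else χ₂ (j - M₁), ?_, ?_⟩
  · intro j hj
    by_cases h : j < M₁
    · simpa [h] using hχ₁ j h
    · simpa [h] using hχ₂ (j - M₁) (by omega)
  · intro x
    dsimp only
    rw [hs₁ x, hs₂ x]
    simp only [sum_range_add]
    have g1 : ∑ j ∈ range M₁,
        (if j < M₁ then c₁ j else -c₂ (j - M₁)) * (if j < M₁ then χ₁ j else χ₂ (j - M₁)) x
        = ∑ j ∈ range M₁, c₁ j * χ₁ j x :=
      sum_congr rfl fun j hj => by have := mem_range.mp hj; simp [this]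
    have g2 : ∑ j ∈ range M₂,
        (if M₁ + j < M₁ then c₁ (M₁ + j) else -c₂ (M₁ + j - M₁)) *
          (if M₁ + j < M₁ then χ₁ (M₁ + j) else χ₂ (M₁ + j - M₁)) x
        = ∑ j ∈ range M₂, -(c₂ j * χ₂ j x) :=
      sum_congr rfl fun j hj => by
        have hlt : ¬ (M₁ + j < M₁) := by omega
        simp [hlt]
    rw [g1, g2, sum_neg_distrib]
    ring
end Aux

section Main

/-- Single-term case: if `μ·A` is a combination of multiplicative functions,
it vanishes. -/
lemma lemL [Semigroup S] {μ A : S → ℂ} (hμ : IsMultiplicativeFn μ) (hA : IsAdditiveFn A)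
    (h : MSpan (fun x => μ x * A x)) : ∀ x, μ x * A x = 0 := by
  obtain ⟨M, c, χ, hχ, hsum⟩ := h
  intro x
  by_cases hx : μ x = 0
  · rw [hx, zero_mul]
  · have hA0 : A x = 0 := by
      apply seqA M c (fun j => χ j x / μ x) (A x) 0
      intro n hn
      obtain ⟨m, rfl⟩ : ∃ m, n = m + 1 := ⟨n - 1, by omega⟩
      have hs := hsum (spow x m)
      dsimp only at hs
      rw [mult_spow hμ, add_spow hA] at hs
      rw [sum_congr rfl (fun j hj => by
        rw [mult_spow (hχ j (mem_range.mp hj)) x m])] at hs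
      have hpow : (μ x) ^ (m + 1) ≠ 0 := pow_ne_zero _ hx
      push_cast
      rw [add_zero]
      apply mul_left_cancel₀ hpow
      rw [hs, mul_sum]
      refine sum_congr rfl fun j _ => ?_
      rw [div_pow]
      field_simp
    rw [hA0, mul_zero]

lemma keyLemma [Semigroup S] : ∀ (N : ℕ) (μ A : ℕ → S → ℂ),
    (∀ i < N, IsMultiplicativeFn (μ i)) →
    (∀ i < N, ∀ j < N, i ≠ j → μ i ≠ μ j) →
    (∀ i < N, IsAdditiveFn (A i)) →
    MSpan (fun x => ∑ i ∈ range N, μ i x * A i x) →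
    ∀ i < N, ∀ x : S, μ i x * A i x = 0 := by
  intro N
  induction N with
  | zero => intro _ _ _ _ _ _ i hi; omega
  | succ N ih =>
    intro μ A hμ hne hA hsp
    obtain ⟨M, c, χ, hχ, hsum⟩ := hsp
    have hzero : ∀ i < N, ∀ x, μ i x * A i x = 0 := by
      intro i hiN
      have hne' : μ i ≠ μ N := hne i (by omega) N (by omega) (by omega)
      obtain ⟨y, hy⟩ := Function.ne_iff.mp hne'
      have hder : ∀ x : S, ∑ k ∈ range (N+1), μ k x * ((μ k y - μ N y) * A k x)
          = (∑ j ∈ range M, (c j * (χ j y - μ N y)) * χ j x)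
            - ∑ k ∈ range (N+1), (μ k y * A k y) * μ k x := by
        intro x
        have h1 := hsum (x * y)
        have h2 := hsum x
        dsimp only at h1 h2
        have e1 : ∑ k ∈ range (N+1), μ k (x * y) * A k (x * y)
            = ∑ k ∈ range (N+1), μ k x * μ k y * (A k x + A k y) :=
          sum_congr rfl fun k hk => by
            rw [hμ k (mem_range.mp hk), hA k (mem_range.mp hk)]
        have e2 : ∑ j ∈ range M, c j * χ j (x * y)
            = ∑ j ∈ range M, c j * (χ j x * χ j y) :=
          sum_congr rfl fun j hj => by rw [hχ j (mem_range.mp hj)]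
        have h1' : ∑ k ∈ range (N+1), μ k x * μ k y * (A k x + A k y)
            = ∑ j ∈ range M, c j * (χ j x * χ j y) := e1.symm.trans (h1.trans e2)
        calc ∑ k ∈ range (N+1), μ k x * ((μ k y - μ N y) * A k x)
            = (∑ k ∈ range (N+1), μ k x * μ k y * (A k x + A k y))
              - μ N y * (∑ k ∈ range (N+1), μ k x * A k x)
              - ∑ k ∈ range (N+1), (μ k y * A k y) * μ k x := by
              rw [mul_sum, ← sum_sub_distrib, ← sum_sub_distrib]
              exact sum_congr rfl fun k _ => by ring
        _ = (∑ j ∈ range M, c j * (χ j x * χ j y))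
              - μ N y * ∑ j ∈ range M, c j * χ j x
              - ∑ k ∈ range (N+1), (μ k y * A k y) * μ k x := by rw [h1', h2]
        _ = _ := by
              rw [mul_sum, ← sum_sub_distrib]
              congr 1
              exact sum_congr rfl fun j _ => by ring
      have m1 : MSpan (fun x : S => ∑ j ∈ range M, (c j * (χ j y - μ N y)) * χ j x) :=
        ⟨M, fun j => c j * (χ j y - μ N y), χ, hχ, fun x => rfl⟩
      have m2 : MSpan (fun x : S => ∑ k ∈ range (N+1), (μ k y * A k y) * μ k x) :=
        ⟨N + 1, fun k => μ k y * A k y, μ, hμ, fun x => rfl⟩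
      have hder' : MSpan (fun x : S => ∑ k ∈ range N, μ k x * ((μ k y - μ N y) * A k x)) := by
        refine (m1.sub m2).congr fun x => ?_
        rw [← hder x, sum_range_succ]
        simp
      have hIH := ih μ (fun k => fun x => (μ k y - μ N y) * A k x)
          (fun k hk => hμ k (by omega))
          (fun k hk j hj hkj => hne k (by omega) j (by omega) hkj)
          (fun k hk => fun u v => by
            dsimp only; rw [hA k (by omega) u v]; ring)
          hder' i hiN
      intro x
      have h0 := hIH x
      have hyne : μ i y - μ N y ≠ 0 := sub_ne_zero.mpr hy
      have : (μ i y - μ N y) * (μ i x * A i x) = 0 := by rw [← h0]; ring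
      exact (mul_eq_zero.mp this).resolve_left hyne
    have hN : ∀ x, μ N x * A N x = 0 := by
      apply lemL (hμ N (by omega)) (hA N (by omega))
      refine ⟨M, c, χ, hχ, fun x => ?_⟩
      have hs := hsum x
      dsimp only at hs ⊢
      rw [← hs, sum_range_succ,
        sum_eq_zero (fun k hk => hzero k (mem_range.mp hk) x), zero_add]
    intro i hi x
    rcases Nat.lt_succ_iff_lt_or_eq.mp hi with h | h
    · exact hzero i h x
    · rw [h]; exact hN x

end Main

/-- If a sum of products of pairwise distinct multiplicative
functions with additive functions equals a linear combination of multiplicative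
functions, then each product vanishes identically. -/
theorem stmt1 [Semigroup S] (N M : ℕ)
    (μ : Fin N → S → ℂ) (A : Fin N → S → ℂ)
    (c : Fin M → ℂ) (χ : Fin M → S → ℂ)
    (hμ : ∀ i, IsMultiplicativeFn (μ i))
    (hμne : ∀ i j, i ≠ j → μ i ≠ μ j)
    (hA : ∀ i, IsAdditiveFn (A i))
    (hχ : ∀ j, IsMultiplicativeFn (χ j))
    (h : ∀ x : S, ∑ i, μ i x * A i x = ∑ j, c j * χ j x) :
    ∀ i, ∀ x : S, μ i x * A i x = 0 := by
  classical
  set μ' : ℕ → S → ℂ := fun n => if h : n < N then μ ⟨n, h⟩ else 0 with hμ'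
  set A' : ℕ → S → ℂ := fun n => if h : n < N then A ⟨n, h⟩ else 0 with hA'
  have hkey : ∀ i < N, ∀ x : S, μ' i x * A' i x = 0 := by
    apply keyLemma N μ' A'
    · intro i hi
      simp only [hμ', dif_pos hi]
      exact hμ ⟨i, hi⟩
    · intro i hi j hj hij
      simp only [hμ', dif_pos hi, dif_pos hj]
      exact hμne ⟨i, hi⟩ ⟨j, hj⟩ (by simpa using hij)
    · intro i hi
      simp only [hA', dif_pos hi]
      exact hA ⟨i, hi⟩
    · refine ⟨M, fun j => if h : j < M then c ⟨j, h⟩ else 0,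
        fun j => if h : j < M then χ ⟨j, h⟩ else 0, ?_, ?_⟩
      · intro j hj
        simp only [dif_pos hj]
        exact hχ ⟨j, hj⟩
      · intro x
        dsimp only
        have hl : ∑ i ∈ range N, μ' i x * A' i x = ∑ i : Fin N, μ i x * A i x := by
          rw [← Fin.sum_univ_eq_sum_range (fun i => μ' i x * A' i x) N]
          exact Fintype.sum_congr _ _ fun i => by
            simp only [hμ', hA', dif_pos i.isLt, Fin.eta]
        have hr : ∑ j ∈ range M,
            (if h : j < M then c ⟨j, h⟩ else 0) * (if h : j < M then χ ⟨j, h⟩ else 0) x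
            = ∑ j : Fin M, c j * χ j x := by
          rw [← Fin.sum_univ_eq_sum_range
            (fun j => (if h : j < M then c ⟨j, h⟩ else 0) * (if h : j < M then χ ⟨j, h⟩ else 0) x) M]
          exact Fintype.sum_congr _ _ fun j => by
            simp only [dif_pos j.isLt, Fin.eta]
        rw [hl, hr, h x]
  intro i x
  have h0 := hkey i.val i.isLt x
  simp only [hμ', hA', dif_pos i.isLt, Fin.eta] at h0
  exact h0
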